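/- arXiv:2410.11968 — 7 statements merged into one kernel-verified Lean document; each statement's English description precedes it below -/
import Mathlib

section
/- Let a, b, d be positive integers with gcd(a,b)=1. Write d = λab + s with 0 ≤ s < ab. Then the number of solutions (m_a, m_b) ∈ ℕ² of d = m_a·a + m_b·b equals λ + den(s), where den(s) ∈ {0,1} is 1 if s is representable as a nonnegative integer combination of a and b, and 0 otherwise. -/
private def denF (a b d : ℕ) : Finset (ℕ × ℕ) :=
  (Finset.range (d+1) ×ˢ Finset.range (d+1)).filter (fun p => d = p.1 * a + p.2 * b)

private lemma mem_denF {a b d : ℕ} (ha : 0 < a) (hb : 0 < b) {p : ℕ × ℕ} :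
    p ∈ denF a b d ↔ d = p.1 * a + p.2 * b := by
  simp only [denF, Finset.mem_filter, Finset.mem_product, Finset.mem_range]
  constructor
  · tauto
  · intro h
    have h1 : p.1 ≤ p.1 * a := Nat.le_mul_of_pos_right _ ha
    have h2 : p.2 ≤ p.2 * b := Nat.le_mul_of_pos_right _ hb
    omega

private lemma uniq {a b : ℕ} (hb : 0 < b) (hab : Nat.gcd a b = 1) {x y x' y' : ℕ}
    (hx : x < b) (hx' : x' < b) (h : x * a + y * b = x' * a + y' * b) :
    x = x' ∧ y = y' := by
  haveI : NeZero b := ⟨hb.ne'⟩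
  have hu : IsUnit (a : ZMod b) := (ZMod.isUnit_iff_coprime a b).mpr hab
  have hz : (a : ZMod b) * x = (a : ZMod b) * x' := by
    have := congrArg (Nat.cast : ℕ → ZMod b) h
    push_cast at this
    rw [ZMod.natCast_self] at this
    ring_nf at this ⊢
    simpa using this
  have hxx : x = x' := by
    have := hu.mul_left_cancel hz
    calc x = ((x : ZMod b)).val := (ZMod.val_cast_of_lt hx).symm
    _ = ((x' : ZMod b)).val := by rw [this]
    _ = x' := ZMod.val_cast_of_lt hx'
  refine ⟨hxx, ?_⟩
  subst hxx
  have : y * b = y' * b := by omega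
  exact Nat.eq_of_mul_eq_mul_right hb this

private lemma exists_small {a b d : ℕ} (ha : 0 < a) (hb : 0 < b) (hab : Nat.gcd a b = 1)
    (hd : a * b ≤ d) : ∃ x y, x < b ∧ d = x * a + y * b := by
  haveI : NeZero b := ⟨hb.ne'⟩
  have hu : IsUnit (a : ZMod b) := (ZMod.isUnit_iff_coprime a b).mpr hab
  set r := ((d : ZMod b) * (a : ZMod b)⁻¹).val with hr
  have hrb : r < b := ZMod.val_lt _
  have hmod : (↑(r * a) : ZMod b) = (d : ZMod b) := by
    push_cast
    rw [hr, ZMod.natCast_val, ZMod.cast_id, mul_assoc, ZMod.inv_mul_of_unit _ hu, mul_one]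
  have hle : r * a ≤ d := by
    have h1 : r * a < b * a := (Nat.mul_lt_mul_right ha).mpr hrb
    have : b * a = a * b := Nat.mul_comm b a
    omega
  have hdvd : b ∣ d - r * a :=
    (Nat.modEq_iff_dvd' hle).mp ((ZMod.natCast_eq_natCast_iff _ _ _).mp hmod)
  refine ⟨r, (d - r * a) / b, hrb, ?_⟩
  have := Nat.div_mul_cancel hdvd
  omega

private lemma card_rec {a b : ℕ} (ha : 0 < a) (hb : 0 < b) (hab : Nat.gcd a b = 1)
    {d : ℕ} (hd : a * b ≤ d) :
    (denF a b d).card = (denF a b (d - a * b)).card + 1 := by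
  classical
  rw [← Finset.card_filter_add_card_filter_not
    (p := fun p : ℕ × ℕ => b ≤ p.1) (s := denF a b d)]
  congr 1
  · -- big part
    have himg : (denF a b d).filter (fun p : ℕ × ℕ => b ≤ p.1)
        = (denF a b (d - a * b)).image (fun p : ℕ × ℕ => (p.1 + b, p.2)) := by
      ext ⟨x, y⟩
      simp only [Finset.mem_filter, Finset.mem_image, mem_denF ha hb, Prod.mk.injEq,
        Prod.exists]
      constructor
      · rintro ⟨hxy, hbx⟩
        refine ⟨x - b, y, ?_, by omega, rfl⟩
        have h1 : (x - b) * a = x * a - b * a := Nat.sub_mul _ _ _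
        have h2 : b * a ≤ x * a := Nat.mul_le_mul_right a hbx
        have h3 : b * a = a * b := Nat.mul_comm b a
        omega
      · rintro ⟨x', y', hxy, rfl, rfl⟩
        have h1 : (x' + b) * a = x' * a + b * a := Nat.add_mul _ _ _
        have h3 : b * a = a * b := Nat.mul_comm b a
        constructor
        · omega
        · omega
    rw [himg, Finset.card_image_of_injective]
    intro p q hpq
    simp only [Prod.mk.injEq] at hpq
    exact Prod.ext (by omega) hpq.2
  · -- small part is a singleton
    obtain ⟨x, y, hxb, hxy⟩ := exists_small ha hb hab hd
    have : (denF a b d).filter (fun p : ℕ × ℕ => ¬ b ≤ p.1) = {(x, y)} := by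
      ext ⟨x', y'⟩
      simp only [Finset.mem_filter, mem_denF ha hb, Finset.mem_singleton, Prod.mk.injEq,
        not_le]
      constructor
      · rintro ⟨hxy', hx'⟩
        exact uniq hb hab hx' hxb (by omega)
      · rintro ⟨rfl, rfl⟩
        exact ⟨hxy, hxb⟩
    rw [this, Finset.card_singleton]

open Classical in
private lemma card_base {a b : ℕ} (ha : 0 < a) (hb : 0 < b) (hab : Nat.gcd a b = 1)
    {s : ℕ} (hs : s < a * b) :
    (denF a b s).card = if ∃ ma mb : ℕ, s = ma * a + mb * b then 1 else 0 := by
  classical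
  have key : ∀ x y : ℕ, s = x * a + y * b → x < b := by
    intro x y hxy
    by_contra hx
    push_neg at hx
    have h2 : b * a ≤ x * a := Nat.mul_le_mul_right a hx
    have h3 : b * a = a * b := Nat.mul_comm b a
    omega
  split_ifs with h
  · obtain ⟨x, y, hxy⟩ := h
    have : denF a b s = {(x, y)} := by
      ext ⟨x', y'⟩
      simp only [mem_denF ha hb, Finset.mem_singleton, Prod.mk.injEq]
      constructor
      · intro hxy'
        exact uniq hb hab (key _ _ hxy') (key _ _ hxy) (by omega)
      · rintro ⟨rfl, rfl⟩
        exact hxy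
    rw [this, Finset.card_singleton]
  · push_neg at h
    have : denF a b s = ∅ := by
      ext ⟨x, y⟩
      simp only [mem_denF ha hb, Finset.notMem_empty, iff_false]
      exact fun hc => h x y hc
    rw [this, Finset.card_empty]

open Classical in
/-- The denumerant `den(d;a,b)` (number of `(m_a, m_b) ∈ ℕ²` with `d = m_a·a + m_b·b`)
satisfies `den(d;a,b) = λ + den(s;a,b)` where `d = λ·a·b + s`, `0 ≤ s < a·b`, and
`den(s;a,b) ∈ {0,1}` is `1` exactly when `s` is representable. -/
theorem stmt_0 (a b d l s : ℕ) (ha : 0 < a) (hb : 0 < b) (hd : 0 < d)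
    (hab : Nat.gcd a b = 1) (hds : d = l * (a * b) + s) (hs : s < a * b) :
    Set.ncard {p : ℕ × ℕ | d = p.1 * a + p.2 * b} =
      l + (if ∃ ma mb : ℕ, s = ma * a + mb * b then 1 else 0) := by
  have hset : {p : ℕ × ℕ | d = p.1 * a + p.2 * b} = ↑(denF a b d) := by
    ext p
    simp [mem_denF ha hb, Set.mem_setOf_eq]
  rw [hset, Set.ncard_coe_finset]
  clear hd hset
  induction l generalizing d with
  | zero =>
    subst hds
    simpa using card_base ha hb hab hs
  | succ n ih =>
    have hexp : (n + 1) * (a * b) = n * (a * b) + a * b := by ring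
    have hge : a * b ≤ d := by omega
    rw [card_rec ha hb hab hge, ih (d - a * b) (by omega)]
    omega
end

section
/- Let a, b be coprime positive integers, q a positive integer, and d > ab(q−1). Define ε = [a ∣ d] + [b ∣ d] (indicator sum). Then min(q − 1 + ε, den(d; a, b)) = q − 1 + ε. -/
/-- If `d > ab(q−1)` and `ε = [a∣d] + [b∣d]`, then
`min(q − 1 + ε, den(d;a,b)) = q − 1 + ε`. -/
theorem stmt_4 (a b q d : ℕ) (ha : 0 < a) (hb : 0 < b) (hab : Nat.gcd a b = 1)
    (hq : 2 ≤ q) (hd : a * b * (q - 1) < d) :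
    min (q - 1 + ((if a ∣ d then 1 else 0) + (if b ∣ d then 1 else 0)))
        (Set.ncard {p : ℕ × ℕ | d = p.1 * a + p.2 * b}) =
      q - 1 + ((if a ∣ d then 1 else 0) + (if b ∣ d then 1 else 0)) := by
  classical
  set S : Set (ℕ × ℕ) := {p : ℕ × ℕ | d = p.1 * a + p.2 * b} with hS
  set N := q - 1 + ((if a ∣ d then 1 else 0) + (if b ∣ d then 1 else 0)) with hN
  apply min_eq_left
  haveI : NeZero b := ⟨hb.ne'⟩
  set m₀ : ℕ := ((d : ZMod b) * (a : ZMod b)⁻¹).val with hm₀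
  have hm₀b : m₀ < b := ZMod.val_lt _
  have hunit : IsUnit (a : ZMod b) := (ZMod.isUnit_iff_coprime a b).mpr hab
  have hmod : m₀ * a ≡ d [MOD b] := by
    have h : ((m₀ * a : ℕ) : ZMod b) = (d : ZMod b) := by
      push_cast
      rw [hm₀, ZMod.natCast_val, ZMod.cast_id, mul_assoc,
        ZMod.inv_mul_of_unit _ hunit, mul_one]
    exact (ZMod.natCast_eq_natCast_iff _ _ _).mp h
  have key : ∀ k < N, (m₀ + k * b) * a ≤ d := by
    intro k hk
    by_cases hbd : b ∣ d
    · have hm0 : m₀ = 0 := by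
        have h0 : (d : ZMod b) = 0 := (ZMod.natCast_eq_zero_iff d b).mpr hbd
        simp [hm₀, h0]
      by_cases had : a ∣ d
      · have habd : a * b ∣ d := Nat.Coprime.mul_dvd_of_dvd_of_dvd hab had hbd
        obtain ⟨t, rfl⟩ := habd
        have ht : q ≤ t := by
          have : q - 1 < t := Nat.lt_of_mul_lt_mul_left hd
          omega
        have hkq : k ≤ q := by simp [hN, had, hbd] at hk; omega
        rw [hm0]
        calc (0 + k * b) * a = k * (a * b) := by ring
          _ ≤ t * (a * b) := Nat.mul_le_mul_right _ (le_trans hkq ht)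
          _ = a * b * t := by ring
      · have hkq : k ≤ q - 1 := by simp [hN, had, hbd] at hk; omega
        rw [hm0]
        calc (0 + k * b) * a = k * (b * a) := by ring
          _ ≤ (q - 1) * (b * a) := Nat.mul_le_mul_right _ hkq
          _ = a * b * (q - 1) := by ring
          _ ≤ d := hd.le
    · by_cases had : a ∣ d
      · obtain ⟨s, rfl⟩ := had
        have h1 : m₀ * a ≡ s * a [MOD b] := hmod.trans (by rw [mul_comm])
        have h2 : m₀ ≡ s [MOD b] := Nat.ModEq.cancel_right_of_coprime (Nat.Coprime.symm hab) h1
        have hm0s : m₀ = s % b := by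
          have h3 : m₀ % b = s % b := h2
          rw [Nat.mod_eq_of_lt hm₀b] at h3
          exact h3
        have hsb : b * (q - 1) < s := by
          have : a * (b * (q - 1)) < a * s := by
            calc a * (b * (q - 1)) = a * b * (q - 1) := by ring
              _ < a * s := hd
          exact Nat.lt_of_mul_lt_mul_left this
        have hcm : (q - 1) * b = b * (q - 1) := mul_comm _ _
        have hqs : q - 1 ≤ s / b := (Nat.le_div_iff_mul_le hb).mpr (by omega)
        have hkq : k ≤ q - 1 := by
          simp [hN, hbd, (show a ∣ a * s from ⟨s, rfl⟩)] at hk; omega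
        have hkb : k * b ≤ (s / b) * b := Nat.mul_le_mul_right _ (le_trans hkq hqs)
        have hmd := Nat.mod_add_div' s b
        have hms : m₀ + k * b ≤ s := by
          rw [hm0s]
          calc s % b + k * b ≤ s % b + (s / b) * b := by omega
            _ = s := by omega
        calc (m₀ + k * b) * a ≤ s * a := Nat.mul_le_mul_right _ hms
          _ = a * s := by ring
      · have hkq : k ≤ q - 2 := by simp [hN, had, hbd] at hk; omega
        have hkb : k * b ≤ (q - 2) * b := Nat.mul_le_mul_right _ hkq
        have heq : (q - 2) * b + b = (q - 1) * b := by
          have h5 : q - 1 = (q - 2) + 1 := by omega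
          rw [h5]; ring
        have heq2 : (q - 1) * b = b * (q - 1) := mul_comm _ _
        have hmk : m₀ + k * b ≤ b * (q - 1) := by omega
        calc (m₀ + k * b) * a ≤ (b * (q - 1)) * a := Nat.mul_le_mul_right _ hmk
          _ = a * b * (q - 1) := by ring
          _ ≤ d := hd.le
  have hmem : ∀ k < N, (m₀ + k * b, (d - (m₀ + k * b) * a) / b) ∈ S := by
    intro k hk
    have h1 := key k hk
    have h2 : (m₀ + k * b) * a ≡ d [MOD b] := by
      calc (m₀ + k * b) * a = m₀ * a + (k * a) * b := by ring
        _ ≡ d + (k * a) * b [MOD b] := hmod.add_right _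
        _ ≡ d + 0 [MOD b] := Nat.ModEq.add_left _
            ((Nat.modEq_zero_iff_dvd).mpr ⟨k * a, mul_comm _ _⟩)
        _ = d := by ring
    have h3 : b ∣ d - (m₀ + k * b) * a := (Nat.modEq_iff_dvd' h1).mp h2
    have h4 : (d - (m₀ + k * b) * a) / b * b = d - (m₀ + k * b) * a :=
      Nat.div_mul_cancel h3
    simp only [hS, Set.mem_setOf_eq]
    omega
  have hfin : S.Finite := by
    apply Set.Finite.subset (Set.finite_Iic ((d, d) : ℕ × ℕ))
    rintro ⟨x, y⟩ hxy
    simp only [hS, Set.mem_setOf_eq] at hxy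
    simp only [Set.mem_Iic, Prod.mk_le_mk]
    constructor <;> nlinarith
  haveI := hfin.fintype
  rw [Set.ncard_eq_toFinset_card' S]
  set f : ℕ → ℕ × ℕ := fun k => (m₀ + k * b, (d - (m₀ + k * b) * a) / b) with hf
  have hinj : Set.InjOn f (Finset.range N) := by
    intro i _ j _ hij
    have := congrArg Prod.fst hij
    simp only [hf] at this
    have : i * b = j * b := by omega
    exact Nat.eq_of_mul_eq_mul_right hb this
  calc N = ((Finset.range N).image f).card := by
        rw [Finset.card_image_of_injOn hinj, Finset.card_range]
    _ ≤ (Set.toFinset S).card := by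
        apply Finset.card_le_card
        intro p hp
        simp only [Finset.mem_image, Finset.mem_range] at hp
        obtain ⟨k, hk, rfl⟩ := hp
        simpa [Set.mem_toFinset] using hmem k hk
end

section
/- Let a, b be coprime positive integers, q ≥ 2 an integer, and d a positive integer with d ≤ ab(q−1). Then den(d; a, b) ≤ q − 1 + [a ∣ d] + [b ∣ d], so that min(q − 1 + [a∣d] + [b∣d], den(d; a, b)) = den(d; a, b). -/
/-- If `d ≤ ab(q−1)` then `den(d;a,b) ≤ q − 1 + [a∣d] + [b∣d]`, hence
`min(q − 1 + [a∣d] + [b∣d], den(d;a,b)) = den(d;a,b)`. -/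
theorem stmt_5 (a b q d : ℕ) (ha : 0 < a) (hb : 0 < b) (hab : Nat.gcd a b = 1)
    (hq : 2 ≤ q) (hd0 : 0 < d) (hd : d ≤ a * b * (q - 1)) :
    Set.ncard {p : ℕ × ℕ | d = p.1 * a + p.2 * b} ≤
        q - 1 + ((if a ∣ d then 1 else 0) + (if b ∣ d then 1 else 0)) ∧
      min (q - 1 + ((if a ∣ d then 1 else 0) + (if b ∣ d then 1 else 0)))
          (Set.ncard {p : ℕ × ℕ | d = p.1 * a + p.2 * b}) =
        Set.ncard {p : ℕ × ℕ | d = p.1 * a + p.2 * b} := by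
  set S := {p : ℕ × ℕ | d = p.1 * a + p.2 * b} with hSdef
  set K := if b ∣ d then q else q - 1 with hKdef
  -- basic facts about members of S
  have hmem : ∀ p : ℕ × ℕ, p ∈ S → d = p.1 * a + p.2 * b := fun p hp => hp
  have hmod : ∀ p : ℕ × ℕ, p ∈ S → p.1 * a ≡ d [MOD b] := by
    intro p hp
    have h0 : p.2 * b ≡ 0 [MOD b] := (Nat.modEq_zero_iff_dvd).mpr ⟨p.2, mul_comm _ _⟩
    have := (Nat.ModEq.refl (p.1 * a)).add h0
    simpa [← hmem p hp] using this.symm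
  -- injectivity of p ↦ p.1 / b on S
  have hinj : Set.InjOn (fun p : ℕ × ℕ => p.1 / b) S := by
    intro p hp p' hp' h
    have h1 : p.1 * a ≡ p'.1 * a [MOD b] := (hmod p hp).trans (hmod p' hp').symm
    have h2 : p.1 ≡ p'.1 [MOD b] :=
      h1.cancel_right_of_coprime (by simpa [Nat.gcd_comm] using hab)
    have h3 : p.1 % b = p'.1 % b := h2
    have h4 : p.1 = p'.1 := by
      have h' : p.1 / b = p'.1 / b := h
      have e1 := Nat.div_add_mod p.1 b
      have e2 := Nat.div_add_mod p'.1 b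
      rw [h', h3] at e1
      omega
    have h5 : p.2 * b = p'.2 * b := by
      have he := (hmem p hp).symm.trans (hmem p' hp')
      rw [h4] at he
      omega
    have h6 : p.2 = p'.2 := Nat.eq_of_mul_eq_mul_right hb h5
    exact Prod.ext h4 h6
  -- range bound
  have hlt : ∀ p : ℕ × ℕ, p ∈ S → p.1 / b < K := by
    intro p hp
    have hle : p.1 * a ≤ d := (hmem p hp) ▸ Nat.le_add_right _ _
    by_contra hcon
    push_neg at hcon
    have hql : (p.1 / b) * b ≤ p.1 := Nat.div_mul_le_self p.1 b
    by_cases hbd : b ∣ d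
    · have hKq : K = q := by simp [hKdef, hbd]
      rw [hKq] at hcon
      have : q * b * a ≤ p.1 * a := by
        have : q * b ≤ p.1 := le_trans (Nat.mul_le_mul_right b hcon) hql
        exact Nat.mul_le_mul_right a this
      have hchain : q * b * a ≤ a * b * (q - 1) := le_trans this (le_trans hle hd)
      have : a * b * q ≤ a * b * (q - 1) := by
        calc a * b * q = q * b * a := by ring
        _ ≤ a * b * (q - 1) := hchain
      have := Nat.le_of_mul_le_mul_left this (Nat.mul_pos ha hb)
      omega
    · have hKq : K = q - 1 := by simp [hKdef, hbd]
      rw [hKq] at hcon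
      -- b does not divide p.1
      have hbp : ¬ b ∣ p.1 := by
        intro hdvd
        apply hbd
        have h1 : b ∣ p.1 * a := hdvd.mul_right a
        have h2 : b ∣ p.2 * b := ⟨p.2, mul_comm _ _⟩
        exact (hmem p hp) ▸ Nat.dvd_add h1 h2
      have hrem : 1 ≤ p.1 % b := by
        rcases Nat.eq_zero_or_pos (p.1 % b) with h | h
        · exact absurd (Nat.dvd_of_mod_eq_zero h) hbp
        · exact h
      have e1 := Nat.div_add_mod' p.1 b
      have hp1 : (q - 1) * b + 1 ≤ p.1 := by
        have : (q - 1) * b ≤ (p.1 / b) * b := Nat.mul_le_mul_right b hcon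
        omega
      have : ((q - 1) * b + 1) * a ≤ p.1 * a := Nat.mul_le_mul_right a hp1
      have hchain : ((q - 1) * b + 1) * a ≤ a * b * (q - 1) := le_trans this (le_trans hle hd)
      have : a * b * (q - 1) + a ≤ a * b * (q - 1) := by
        calc a * b * (q - 1) + a = ((q - 1) * b + 1) * a := by ring
        _ ≤ a * b * (q - 1) := hchain
      omega
  -- finiteness of S
  have hfin : S.Finite := by
    apply Set.Finite.subset (Set.finite_Iic (d, d))
    intro p hp
    have h1 : p.1 * a ≤ d := (hmem p hp) ▸ Nat.le_add_right _ _
    have h2 : p.2 * b ≤ d := (hmem p hp) ▸ Nat.le_add_left _ _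
    have h3 : p.1 ≤ p.1 * a := Nat.le_mul_of_pos_right _ ha
    have h4 : p.2 ≤ p.2 * b := Nat.le_mul_of_pos_right _ hb
    exact ⟨le_trans h3 h1, le_trans h4 h2⟩
  -- cardinality bound
  have hcard : S.ncard ≤ K := by
    have himg : (fun p : ℕ × ℕ => p.1 / b) '' S ⊆ ↑(Finset.range K) := by
      rintro x ⟨p, hp, rfl⟩
      simpa using hlt p hp
    calc S.ncard = ((fun p : ℕ × ℕ => p.1 / b) '' S).ncard :=
          (Set.ncard_image_of_injOn hinj).symm
      _ ≤ (↑(Finset.range K) : Set ℕ).ncard :=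
          Set.ncard_le_ncard himg (Finset.range K).finite_toSet
      _ = K := by rw [Set.ncard_coe_finset, Finset.card_range]
  have hfinal : S.ncard ≤ q - 1 + ((if a ∣ d then 1 else 0) + (if b ∣ d then 1 else 0)) := by
    refine le_trans hcard ?_
    by_cases hbd : b ∣ d <;> simp [hKdef, hbd] <;> omega
  exact ⟨hfinal, min_eq_right hfinal⟩
end

section
/- Let q ≥ 2 and let a, b be coprime integers with 2 ≤ a < b. Define, for an integer a₂ with max(0, ⌊(d−1−a(q−1))/b⌋)+1 ≤ a₂ ≤ min(⌊(d−1)/(a+b)⌋, q−1), the function L̃(a₂) = (q − ⌊(d−1−b·a₂)/a⌋)(q − a₂). Then L̃(a₂) − L̃(a₂−1) ≥ (q − a₂ + 1)(⌊(b−1)/a⌋ − 1) + 1 > 0; in particular L̃ is strictly increasing on this range. -/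
/-- Strict increase of `L̃(a₂) = (q − ⌊(d−1−b·a₂)/a⌋)(q − a₂)` on the range
`max(0, ⌊(d−1−a(q−1))/b⌋)+1 ≤ a₂ ≤ min(⌊(d−1)/(a+b)⌋, q−1)`:
the increment is at least `(q − a₂ + 1)(⌊(b−1)/a⌋ − 1) + 1 > 0`. -/
theorem stmt_10 (q a b d : ℤ) (hq : 2 ≤ q) (ha : 2 ≤ a) (hab : a < b)
    (hcop : IsCoprime a b) (hd : 0 < d) :
    ∀ a₂ : ℤ, max 0 ((d - 1 - a * (q - 1)) / b) + 1 ≤ a₂ →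
      a₂ ≤ min ((d - 1) / (a + b)) (q - 1) →
      ((q - (d - 1 - b * a₂) / a) * (q - a₂)
          - (q - (d - 1 - b * (a₂ - 1)) / a) * (q - (a₂ - 1))
        ≥ (q - a₂ + 1) * ((b - 1) / a - 1) + 1) ∧
      (q - a₂ + 1) * ((b - 1) / a - 1) + 1 > 0 := by
  intro a₂ hlo hhi
  have ha0 : (0:ℤ) < a := by linarith
  have hab0 : (0:ℤ) < a + b := by linarith
  have ha2q : a₂ ≤ q - 1 := le_trans hhi (min_le_right _ _)
  have ha2d : a₂ ≤ (d - 1) / (a + b) := le_trans hhi (min_le_left _ _)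
  have hmul : a₂ * (a + b) ≤ d - 1 := (Int.le_ediv_iff_mul_le hab0).mp ha2d
  set m : ℤ := d - 1 - b * a₂ with hm
  have hrw : d - 1 - b * (a₂ - 1) = m + b := by ring
  set f1 : ℤ := m / a with hf1
  set f0 : ℤ := (m + b) / a with hf0
  set k : ℤ := (b - 1) / a with hk
  -- k ≥ 1
  have hk1 : 1 ≤ k := (Int.le_ediv_iff_mul_le ha0).mpr (by linarith)
  -- f1 ≥ a₂
  have hf1a2 : a₂ ≤ f1 := (Int.le_ediv_iff_mul_le ha0).mpr (by nlinarith)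
  -- f1*a ≤ m, k*a ≤ b-1
  have hf1m : f1 * a ≤ m := (Int.le_ediv_iff_mul_le ha0).mp le_rfl
  have hkb : k * a ≤ b - 1 := (Int.le_ediv_iff_mul_le ha0).mp le_rfl
  -- f0 ≥ f1 + k
  have hf0 : f1 + k ≤ f0 := (Int.le_ediv_iff_mul_le ha0).mpr (by nlinarith)
  rw [hrw]
  have hq2 : 2 ≤ q - a₂ + 1 := by linarith
  constructor
  · nlinarith [mul_nonneg (by linarith : (0:ℤ) ≤ q - a₂ + 1) (by linarith : (0:ℤ) ≤ f0 - f1 - k)]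
  · nlinarith
end

section
/- Let a, b be coprime positive integers with a ≥ 1, and q ≥ 2, and d ≥ bq an integer with d = λab + s, 0 ≤ s < ab. Write i_max + 1 = λ + den(s;a,b) − [a∣d] − [b∣d]. Then i_max + 1 ∈ {⌊(d−b)/(ab)⌋, ⌊(d−b)/(ab)⌋ + 1}. -/
private lemma div_helper_15 (c x l : ℕ) (hc : 0 < c) (hx : x < c) : (x + c * l) / c = l := by
  rw [Nat.add_mul_div_left _ _ hc, Nat.div_eq_of_lt hx, Nat.zero_add]

open Classical in
/-- For `d ≥ bq` written as `d = λ·ab + s` with `0 ≤ s < ab`, the number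
`i_max + 1 = λ + den(s;a,b) − [a∣d] − [b∣d]` equals `⌊(d−b)/(ab)⌋` or
`⌊(d−b)/(ab)⌋ + 1`. -/
theorem stmt_15 (a b q d lam s : ℕ) (ha : 0 < a) (hb : 0 < b)
    (hcop : Nat.gcd a b = 1) (hq : 2 ≤ q) (hd : b * q ≤ d)
    (hds : d = lam * (a * b) + s) (hs : s < a * b) :
    ((lam : ℤ) + Set.ncard {p : ℕ × ℕ | s = p.1 * a + p.2 * b}
        - (if a ∣ d then 1 else 0) - (if b ∣ d then 1 else 0)
          = ((d - b) / (a * b) : ℕ)) ∨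
    ((lam : ℤ) + Set.ncard {p : ℕ × ℕ | s = p.1 * a + p.2 * b}
        - (if a ∣ d then 1 else 0) - (if b ∣ d then 1 else 0)
          = ((d - b) / (a * b) : ℕ) + 1) := by
  have hcop' : Nat.Coprime a b := hcop
  have hABpos : 0 < a * b := Nat.mul_pos ha hb
  have hbab : b ≤ a * b := Nat.le_mul_of_pos_left b ha
  have h2b : b * 2 ≤ d := le_trans (Nat.mul_le_mul (le_refl b) hq) hd
  set S : Set (ℕ × ℕ) := {p : ℕ × ℕ | s = p.1 * a + p.2 * b} with hSdef
  -- uniqueness of representations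
  have main : ∀ m n m' n' : ℕ, s = m * a + n * b → s = m' * a + n' * b →
      n' ≤ n → n = n' ∧ m = m' := by
    intro m n m' n' h1 h2 hle
    obtain ⟨u, rfl⟩ := Nat.exists_eq_add_of_le hle
    have heq : (m : ℤ) * a + u * b = m' * a := by
      have h1' : (s : ℤ) = m * a + (n' + u) * b := by exact_mod_cast h1
      have h2' : (s : ℤ) = m' * a + n' * b := by exact_mod_cast h2
      nlinarith [h1', h2']
    have hdvd : a ∣ u * b := by
      have : (a : ℤ) ∣ (u : ℤ) * b := ⟨(m' : ℤ) - m, by linarith [heq]⟩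
      exact_mod_cast this
    have hau : a ∣ u := hcop'.dvd_of_dvd_mul_right hdvd
    rcases Nat.eq_zero_or_pos u with rfl | hu
    · constructor
      · omega
      · have : (m : ℤ) * a = m' * a := by simpa using heq
        have : m = m' := by
          have ha' : (a : ℤ) ≠ 0 := by exact_mod_cast ha.ne'
          exact_mod_cast mul_right_cancel₀ ha' this
        exact this
    · exfalso
      have hua : a ≤ u := Nat.le_of_dvd hu hau
      have : a * b ≤ u * b := Nat.mul_le_mul_right b hua
      have hub : u * b ≤ s := by
        rw [h1]
        calc u * b ≤ (n' + u) * b := Nat.mul_le_mul_right b (by omega)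
          _ ≤ m * a + (n' + u) * b := Nat.le_add_left _ _
      omega
  have hsub : S.Subsingleton := by
    rintro ⟨m, n⟩ hp ⟨m', n'⟩ hp'
    simp only [hSdef, Set.mem_setOf_eq] at hp hp'
    rcases le_total n' n with h | h
    · obtain ⟨h1, h2⟩ := main m n m' n' hp hp' h
      simp [h1, h2]
    · obtain ⟨h1, h2⟩ := main m' n' m n hp' hp h
      simp [h1, h2]
  have hcard01 : S.ncard = 0 ∨ S.ncard = 1 := by
    rcases hsub.eq_empty_or_singleton with h | ⟨p, h⟩ <;> simp [h]
  have hcard1 : ∀ p : ℕ × ℕ, p ∈ S → S.ncard = 1 := by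
    intro p hp
    have : S = {p} := Set.eq_singleton_iff_unique_mem.mpr ⟨hp, fun q hq => hsub hq hp⟩
    simp [this]
  -- divisibility transfer
  have hda : a ∣ d ↔ a ∣ s := by
    rw [hds]
    exact Nat.dvd_add_right ((dvd_mul_right a b).mul_left lam)
  have hdb : b ∣ d ↔ b ∣ s := by
    rw [hds]
    exact Nat.dvd_add_right ((dvd_mul_left b a).mul_left lam)
  by_cases hsb : s < b
  · -- s < b : floor = lam - 1
    have hlam : 1 ≤ lam := by
      rcases Nat.eq_zero_or_pos lam with rfl | h
      · simp only [Nat.zero_mul, Nat.zero_add] at hds; omega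
      · exact h
    obtain ⟨lam', rfl⟩ : ∃ l, lam = l + 1 := ⟨lam - 1, by omega⟩
    have hdmb : d - b = (a * b + s - b) + (a * b) * lam' := by
      have h1 : d = (a * b) * lam' + (a * b) + s := by rw [hds]; ring
      set c := a * b with hc
      set e := c * lam' with he
      omega
    have hlt : a * b + s - b < a * b := by
      set c := a * b with hc
      omega
    have hD : (d - b) / (a * b) = lam' := by
      rw [hdmb, div_helper_15 _ _ _ hABpos hlt]
    by_cases hA : a ∣ s
    · by_cases hB : b ∣ s
      · -- s = 0 : N = 1, result = lam - 1 = D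
        have hs0 : s = 0 := Nat.eq_zero_of_dvd_of_lt hB hsb
        have hN : S.ncard = 1 := hcard1 (0, 0) (by
          simp [hSdef, hs0])
        left
        rw [if_pos (hda.mpr hA), if_pos (hdb.mpr hB), hN, hD]
        push_cast
        omega
      · -- a ∣ s, b ∤ s : N = 1, result = lam = D + 1
        have hN : S.ncard = 1 := hcard1 (s / a, 0) (by
          simp only [hSdef, Set.mem_setOf_eq]
          simp [Nat.div_mul_cancel hA])
        right
        rw [if_pos (hda.mpr hA), if_neg (fun h => hB (hdb.mp h)), hN, hD]
        push_cast
        omega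
    · by_cases hB : b ∣ s
      · -- b ∣ s, s < b ⇒ s = 0 ⇒ a ∣ s, contradiction
        have hs0 : s = 0 := Nat.eq_zero_of_dvd_of_lt hB hsb
        exact absurd (hs0 ▸ dvd_zero a) hA
      · -- neither divides : N = 0, result = lam = D + 1
        have hN : S.ncard = 0 := by
          have hSe : S = ∅ := by
            ext ⟨m, n⟩
            simp only [hSdef, Set.mem_setOf_eq, Set.mem_empty_iff_false, iff_false]
            intro h
            rcases Nat.eq_zero_or_pos n with rfl | hn
            · exact hA ⟨m, by simpa [mul_comm] using h⟩
            · have h2 : n * b ≤ s := h ▸ Nat.le_add_left _ _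
              have h3 : b ≤ n * b := Nat.le_mul_of_pos_left b hn
              omega
          simp [hSe]
        right
        rw [if_neg (fun h => hA (hda.mp h)), if_neg (fun h => hB (hdb.mp h)), hN, hD]
        push_cast
        omega
  · -- s ≥ b : floor = lam
    push_neg at hsb
    have hdmb : d - b = (s - b) + (a * b) * lam := by
      have h1 : d = (a * b) * lam + s := by rw [hds]; ring
      set c := a * b with hc
      set e := c * lam with he
      omega
    have hD : (d - b) / (a * b) = lam := by
      rw [hdmb, div_helper_15 _ _ _ hABpos (lt_of_le_of_lt (Nat.sub_le s b) hs)]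
    by_cases hA : a ∣ s
    · by_cases hB : b ∣ s
      · -- both divide ⇒ ab ∣ s ⇒ s = 0 < b ≤ s contradiction
        have : a * b ∣ s := hcop'.mul_dvd_of_dvd_of_dvd hA hB
        have hs0 : s = 0 := Nat.eq_zero_of_dvd_of_lt this hs
        omega
      · have hN : S.ncard = 1 := hcard1 (s / a, 0) (by
          simp only [hSdef, Set.mem_setOf_eq]
          simp [Nat.div_mul_cancel hA])
        left
        rw [if_pos (hda.mpr hA), if_neg (fun h => hB (hdb.mp h)), hN, hD]
        push_cast
        omega
    · by_cases hB : b ∣ s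
      · have hN : S.ncard = 1 := hcard1 (0, s / b) (by
          simp only [hSdef, Set.mem_setOf_eq]
          simp [Nat.div_mul_cancel hB])
        left
        rw [if_neg (fun h => hA (hda.mp h)), if_pos (hdb.mpr hB), hN, hD]
        push_cast
        omega
      · rcases hcard01 with hN | hN
        · left
          rw [if_neg (fun h => hA (hda.mp h)), if_neg (fun h => hB (hdb.mp h)), hN, hD]
          push_cast
          omega
        · right
          rw [if_neg (fun h => hA (hda.mp h)), if_neg (fun h => hB (hdb.mp h)), hN, hD]
          push_cast
          omega
end

section
/- Let q ≥ 2 and let b be a positive integer, a = 1. For any positive integer d, the set R(d) ∪ T(d) ∪ H(d) (with ℓ, μ_a, μ_b, E_h as below) has cardinality (ℓ+1)(μ_a+1) + (μ_b−ℓ)d − b·C(μ_b+1,2) + b·C(ℓ+1,2) + μ_b + 1 + [b ∣ d], where C(n,2) = n(n−1)/2. Equivalently, the dimension of the weighted projective Reed–Muller code on ℙ(1,1,b) over F_q in degree d is given by this formula. -/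
open Finset in
private lemma icc_succ' (a n : ℤ) (h : a ≤ n + 1) :
    Finset.Icc a (n+1) = insert (n+1) (Finset.Icc a n) := by
  ext x; simp [Finset.mem_Icc]; omega

private lemma gauss_sum' (a c : ℤ) (hc : a - 1 ≤ c) :
    2 * (∑ y ∈ Finset.Icc a c, y) = (c + 1 - a) * (a + c) := by
  refine Int.le_induction (motive := fun c _ => 2 * (∑ y ∈ Finset.Icc a c, y) = (c + 1 - a) * (a + c))
    ?_ ?_ c hc
  · rw [Finset.Icc_eq_empty (by omega)]; simp
  · intro n hn ih
    rw [icc_succ' a n (by omega), Finset.sum_insert (by simp [Finset.mem_Icc])]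
    rw [mul_add, ih]; ring

open Classical in
/-- Dimension of the weighted projective Reed–Muller code on `ℙ(1,1,b)` in degree `d`:
the cardinality of `R(d) ∪ T(d) ∪ H(d)` equals
`(ℓ+1)(μ_a+1) + (μ_b−ℓ)d − b·C(μ_b+1,2) + b·C(ℓ+1,2) + μ_b + 1 + [b ∣ d]`. -/
theorem stmt_16 (q b d : ℤ) (hq : 2 ≤ q) (hb : 1 ≤ b) (hd : 0 < d) :
    let μa : ℤ := min (d - 1) (q - 1)
    let μb : ℤ := min ((d - 1) / b) (q - 1)
    let l : ℤ := max 0 (min (q - 1) ((d - q) / b))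
    let R : Set (ℤ × ℤ) := {p | 0 ≤ p.1 ∧ p.1 ≤ μa ∧ 0 ≤ p.2 ∧ p.2 ≤ l}
    let T : Set (ℤ × ℤ) := {p | l + 1 ≤ p.2 ∧ p.2 ≤ μb ∧ 0 ≤ p.1 ∧ p.1 ≤ d - 1 - b * p.2}
    let H : Set (ℤ × ℤ) :=
      {p | ∃ y : ℤ, 1 ≤ y ∧ y ≤ μb ∧ p = (d - b * y, y)} ∪ {(d, 0)} ∪
        {p | b ∣ d ∧ p = (0, d / b)}
    ((R ∪ T ∪ H).ncard : ℤ) =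
      (l + 1) * (μa + 1) + (μb - l) * d - b * ((μb + 1) * μb / 2)
        + b * ((l + 1) * l / 2) + μb + 1 + (if b ∣ d then 1 else 0) := by
  intro μa μb l R T H
  classical
  have hb0 : 0 < b := hb
  have hμa0 : 0 ≤ μa := le_min (by omega) (by omega)
  have hμaq : μa ≤ q - 1 := min_le_right _ _
  have hμad : μa ≤ d - 1 := min_le_left _ _
  have hdb0 : 0 ≤ (d-1)/b := Int.ediv_nonneg (by omega) (by omega)
  have hμb0 : 0 ≤ μb := le_min hdb0 (by omega)
  have hl0 : 0 ≤ l := le_max_left _ _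
  have hql : min (q-1) ((d-q)/b) ≤ μb :=
    le_min ((min_le_right _ _).trans (Int.ediv_le_ediv hb0 (by omega))) (min_le_left _ _)
  have hlμb : l ≤ μb := max_le hμb0 hql
  have hkey : ∀ y : ℤ, y ≤ μb → b * y ≤ d - 1 := by
    intro y hy
    have h1 : y ≤ (d-1)/b := hy.trans (min_le_left _ _)
    have h2 := (Int.le_ediv_iff_mul_le hb0).mp h1
    linarith
  have hRH : ∀ y : ℤ, 1 ≤ y → y ≤ l → q ≤ d - b*y := by
    intro y h1 h2
    have hl : l = max 0 (min (q-1) ((d-q)/b)) := rfl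
    have he : y ≤ (d-q)/b := by
      have h3 := min_le_right (q-1) ((d-q)/b)
      omega
    have h4 := (Int.le_ediv_iff_mul_le hb0).mp he
    linarith
  have hdvdfacts : b ∣ d → μb < d / b ∧ 1 ≤ d / b := by
    intro hbd
    have hdb : b * (d / b) = d := Int.mul_ediv_cancel' hbd
    have h1 : b ≤ d := Int.le_of_dvd hd hbd
    have h2 : 1 ≤ d / b := by
      rw [Int.le_ediv_iff_mul_le hb0]; omega
    have h3 : b * ((d-1)/b) ≤ d - 1 := by
      have := Int.ediv_mul_le (d-1) (show b ≠ 0 by omega)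
      linarith [Int.ediv_mul_le (d-1) (show b ≠ 0 by omega)]
    have h4 : (d-1)/b < d/b := by
      have : b * ((d-1)/b) < b * (d/b) := by omega
      exact lt_of_mul_lt_mul_left this (by omega)
    exact ⟨lt_of_le_of_lt (min_le_left _ _) h4, h2⟩
  -- Finsets
  set FR : Finset (ℤ×ℤ) := Finset.Icc (0:ℤ) μa ×ˢ Finset.Icc (0:ℤ) l with hFR
  set FT : Finset (ℤ×ℤ) :=
    (Finset.Icc (l+1) μb).biUnion
      (fun y => (Finset.Icc (0:ℤ) (d-1-b*y)).image (fun x => (x, y))) with hFT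
  set FH : Finset (ℤ×ℤ) :=
    ((Finset.Icc (1:ℤ) μb).image (fun y => (d - b*y, y))) ∪ {((d:ℤ),(0:ℤ))}
      ∪ (if b ∣ d then {((0:ℤ), d/b)} else ∅) with hFH
  have hset : R ∪ T ∪ H = ↑(FR ∪ FT ∪ FH) := by
    ext ⟨x,y⟩
    simp only [R, T, H, hFR, hFT, hFH, Finset.coe_union, Set.mem_union, Set.mem_setOf_eq,
      Finset.mem_coe, Finset.mem_product, Finset.mem_Icc, Finset.mem_biUnion,
      Finset.mem_image, Finset.mem_union, Finset.mem_singleton, Set.mem_singleton_iff,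
      Prod.mk.injEq, Prod.ext_iff]
    constructor
    · rintro ((⟨h1,h2,h3,h4⟩|⟨h1,h2,h3,h4⟩)|((⟨y',h1,h2,h3,h4⟩|h)|⟨hbd,h1,h2⟩))
      · exact Or.inl (Or.inl ⟨⟨h1,h2⟩,⟨h3,h4⟩⟩)
      · exact Or.inl (Or.inr ⟨y, ⟨h1,h2⟩, x, ⟨h3,h4⟩, rfl, rfl⟩)
      · exact Or.inr (Or.inl (Or.inl ⟨y', ⟨h1,h2⟩, h3.symm, h4.symm⟩))
      · exact Or.inr (Or.inl (Or.inr ⟨h.1, h.2⟩))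
      · refine Or.inr (Or.inr ?_)
        rw [if_pos hbd]; simp [h1, h2]
    · rintro ((⟨⟨h1,h2⟩,h3,h4⟩|⟨y',⟨h1,h2⟩,x',⟨h3,h4⟩,h5,h6⟩)|((⟨y',⟨h1,h2⟩,h3,h4⟩|⟨h1,h2⟩)|h))
      · exact Or.inl (Or.inl ⟨h1,h2,h3,h4⟩)
      · subst h5; subst h6; exact Or.inl (Or.inr ⟨h1,h2,h3,h4⟩)
      · exact Or.inr (Or.inl (Or.inl ⟨y', h1, h2, h3.symm, h4.symm⟩))
      · exact Or.inr (Or.inl (Or.inr ⟨h1,h2⟩))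
      · by_cases hbd : b ∣ d
        · rw [if_pos hbd] at h; simp at h
          exact Or.inr (Or.inr ⟨hbd, h.1, h.2⟩)
        · rw [if_neg hbd] at h; simp at h
  -- disjointness
  have hdis1 : Disjoint FR FT := by
    rw [Finset.disjoint_left]
    rintro ⟨x,y⟩ hp hq'
    simp only [hFR, hFT, Finset.mem_product, Finset.mem_Icc, Finset.mem_biUnion,
      Finset.mem_image, Prod.mk.injEq] at hp hq'
    obtain ⟨y', hy', x', hx', h1, h2⟩ := hq'
    omega
  have hdis2 : Disjoint (FR ∪ FT) FH := by
    rw [Finset.disjoint_left]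
    rintro ⟨x,y⟩ hp hq'
    simp only [hFH, Finset.mem_union, Finset.mem_image, Finset.mem_Icc,
      Finset.mem_singleton, Prod.mk.injEq] at hq'
    simp only [hFR, hFT, Finset.mem_union, Finset.mem_product, Finset.mem_Icc,
      Finset.mem_biUnion, Finset.mem_image, Prod.mk.injEq] at hp
    rcases hq' with ((⟨y',⟨h1,h2⟩,h3,h4⟩|⟨h1,h2⟩)|h)
    · subst h4; subst h3
      rcases hp with ⟨⟨hx1,hx2⟩,hy1,hy2⟩|⟨y2,hy2,x2,hx2,h5,h6⟩
      · have := hRH y' h1 hy2; omega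
      · subst h6; omega
    · subst h1; subst h2
      rcases hp with ⟨⟨hx1,hx2⟩,hy1,hy2⟩|⟨y2,hy2,x2,hx2,h5,h6⟩
      · omega
      · omega
    · by_cases hbd : b ∣ d
      · rw [if_pos hbd] at h; simp only [Finset.mem_singleton, Prod.mk.injEq] at h
        obtain ⟨hmu, h1db⟩ := hdvdfacts hbd
        obtain ⟨h1, h2⟩ := h; subst h1; subst h2
        rcases hp with ⟨⟨hx1,hx2⟩,hy1,hy2⟩|⟨y2,hy2,x2,hx2,h5,h6⟩
        · omega
        · omega
      · rw [if_neg hbd] at h; simp at h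
  -- cardinalities
  have hcardFR : (FR.card : ℤ) = (μa+1)*(l+1) := by
    rw [hFR, Finset.card_product, Int.card_Icc, Int.card_Icc]
    push_cast
    rw [Int.toNat_of_nonneg (by omega), Int.toNat_of_nonneg (by omega)]
    ring
  have hcardFT : (FT.card : ℤ) = ∑ y ∈ Finset.Icc (l+1) μb, (d - b*y) := by
    rw [hFT, Finset.card_biUnion]
    · push_cast
      refine Finset.sum_congr rfl ?_
      intro y hy
      rw [Finset.mem_Icc] at hy
      rw [Finset.card_image_of_injective _ (fun a₁ a₂ h => by simpa using congrArg Prod.fst h)]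
      rw [Int.card_Icc]
      have := hkey y hy.2
      rw [Int.toNat_of_nonneg (by omega)]
      ring
    · intro y1 h1 y2 h2 hne
      rw [Function.onFun, Finset.disjoint_left]
      rintro ⟨x,y⟩ hp hq'
      simp only [Finset.mem_image, Prod.mk.injEq] at hp hq'
      obtain ⟨x1, _, _, e1⟩ := hp
      obtain ⟨x2, _, _, e2⟩ := hq'
      exact hne (e1.trans e2.symm)
  have hinj : Function.Injective (fun y : ℤ => (d - b*y, y)) :=
    fun a₁ a₂ h => by simpa using congrArg Prod.snd h
  have hcard1 : (((Finset.Icc (1:ℤ) μb).image (fun y => (d - b*y, y))).card : ℤ) = μb := by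
    rw [Finset.card_image_of_injective _ hinj, Int.card_Icc]
    rw [Int.toNat_of_nonneg (by omega)]; ring
  have hdisH1 : Disjoint ((Finset.Icc (1:ℤ) μb).image (fun y => (d - b*y, y)))
      ({((d:ℤ),(0:ℤ))} : Finset (ℤ×ℤ)) := by
    rw [Finset.disjoint_left]
    rintro ⟨x,y⟩ hp hq'
    simp only [Finset.mem_image, Finset.mem_Icc, Prod.mk.injEq] at hp
    simp only [Finset.mem_singleton, Prod.mk.injEq] at hq'
    obtain ⟨y', ⟨h1,h2⟩, h3, h4⟩ := hp
    omega
  have hcardFH : (FH.card : ℤ) = μb + 1 + (if b ∣ d then 1 else 0) := by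
    rw [hFH]
    by_cases hbd : b ∣ d
    · obtain ⟨hmu, h1db⟩ := hdvdfacts hbd
      rw [if_pos hbd, if_pos hbd]
      rw [Finset.card_union_of_disjoint, Finset.card_union_of_disjoint hdisH1]
      · push_cast [Finset.card_singleton]; rw [hcard1]
      · rw [Finset.disjoint_left]
        rintro ⟨x,y⟩ hp hq'
        simp only [Finset.mem_singleton, Prod.mk.injEq] at hq'
        obtain ⟨h1, h2⟩ := hq'; subst h1; subst h2
        simp only [Finset.mem_union, Finset.mem_image, Finset.mem_Icc,
          Finset.mem_singleton, Prod.mk.injEq] at hp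
        rcases hp with ⟨y',⟨h1,h2⟩,h3,h4⟩|⟨h1,h2⟩ <;> omega
    · rw [if_neg hbd, if_neg hbd, Finset.union_empty,
        Finset.card_union_of_disjoint hdisH1]
      push_cast [Finset.card_singleton]; rw [hcard1]; ring
  -- putting it together
  rw [hset, Set.ncard_coe_finset,
    Finset.card_union_of_disjoint hdis2, Finset.card_union_of_disjoint hdis1]
  push_cast
  rw [hcardFR, hcardFT, hcardFH]
  set S := ∑ y ∈ Finset.Icc (l+1) μb, y with hSdef
  have hsum : ∑ y ∈ Finset.Icc (l+1) μb, (d - b*y) = (μb - l)*d - b*S := by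
    rw [Finset.sum_sub_distrib, Finset.sum_const, ← Finset.mul_sum, Int.card_Icc,
      nsmul_eq_mul]
    have hc : (((μb + 1 - (l+1)).toNat : ℤ)) = μb - l := by
      rw [Int.toNat_of_nonneg (by omega)]; ring
    rw [hc]
  rw [hsum]
  set A := (μb+1)*μb/2 with hA
  set B := (l+1)*l/2 with hB
  have h2A : 2*A = (μb+1)*μb := by
    rw [hA]
    exact Int.mul_ediv_cancel' (by rw [mul_comm]; exact (Int.even_mul_succ_self μb).two_dvd)
  have h2B : 2*B = (l+1)*l := by
    rw [hB]
    exact Int.mul_ediv_cancel' (by rw [mul_comm]; exact (Int.even_mul_succ_self l).two_dvd)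
  have hg : 2*S = (μb + 1 - (l+1)) * ((l+1) + μb) := gauss_sum' (l+1) μb (by omega)
  have hg2 : 2*S = 2*A - 2*B := by rw [hg]; linear_combination -h2A + h2B
  have hSeq : S = A - B := by omega
  linear_combination (-b) * hSeq
end

section
/- Let q ≥ 2, and let a ≤ b be coprime positive integers, and d a positive integer with d ≤ (a+b)(q−1) and a(q−1) < d. Set ℓ = ⌊(d−1−a(q−1))/b⌋ and μ_b = min(⌊(d−1)/b⌋, q−1). Define L̃(a₂) = q − a₂ for 0 ≤ a₂ ≤ ℓ, and L̃(a₂) = (q − ⌊(d−1−b·a₂)/a⌋)(q − a₂) for ℓ < a₂ ≤ μ_b. Then min over 0 ≤ a₂ ≤ min(μ_b, ⌊(d−1)/(a+b)⌋) of L̃(a₂) equals q − ℓ, provided b > a. -/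
private lemma ediv_bounds' (n b : ℤ) (hb : 0 < b) :
    b * (n / b) ≤ n ∧ n < b * (n / b) + b := by
  have h := Int.mul_ediv_add_emod n b
  have h1 := Int.emod_nonneg n (ne_of_gt hb)
  have h2 := Int.emod_lt_of_pos n hb
  constructor <;> linarith

open Classical in
/-- For `1 ≤ a < b` coprime, `a(q−1) < d ≤ (a+b)(q−1)`, `ℓ = ⌊(d−1−a(q−1))/b⌋`,
`μ_b = min(⌊(d−1)/b⌋, q−1)`, the minimum of `L̃` over `0 ≤ a₂ ≤ min(μ_b, ⌊(d−1)/(a+b)⌋)`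
is `q − ℓ`. -/
theorem stmt_17 (q a b d : ℤ) (hq : 2 ≤ q) (ha : 1 ≤ a) (hab : a < b)
    (hcop : IsCoprime a b) (hd1 : a * (q - 1) < d) (hd2 : d ≤ (a + b) * (q - 1)) :
    let l : ℤ := (d - 1 - a * (q - 1)) / b
    let μb : ℤ := min ((d - 1) / b) (q - 1)
    let Lt : ℤ → ℤ := fun a₂ =>
      if a₂ ≤ l then q - a₂ else (q - (d - 1 - b * a₂) / a) * (q - a₂)
    IsLeast (Lt '' Set.Icc 0 (min μb ((d - 1) / (a + b)))) (q - l) := by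
  intro l μb Lt
  have hb : (0:ℤ) < b := by linarith
  have ha' : (0:ℤ) < a := by linarith
  have hab' : (0:ℤ) < a + b := by linarith
  have hl1 : b * l ≤ d - 1 - a * (q - 1) := (ediv_bounds' (d - 1 - a * (q - 1)) b hb).1
  have hl2 : d - 1 - a * (q - 1) < b * l + b := (ediv_bounds' (d - 1 - a * (q - 1)) b hb).2
  -- l ≥ 0
  have hl0 : 0 ≤ l := by nlinarith
  -- l ≤ q - 2
  have hlq : l ≤ q - 2 := by
    have h1 : b * l < b * (q - 1) := by nlinarith
    have := lt_of_mul_lt_mul_left h1 (le_of_lt hb)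
    linarith
  constructor
  · -- membership: a₂ = l achieves q - l
    refine ⟨l, ⟨hl0, ?_⟩, ?_⟩
    · refine le_min (le_min ?_ (by linarith)) ?_
      · rw [Int.le_ediv_iff_mul_le hb]; nlinarith
      · rw [Int.le_ediv_iff_mul_le hab']; nlinarith
    · simp [Lt]
  · rintro y ⟨a₂, ⟨h0, hM⟩, rfl⟩
    have hM1 : a₂ ≤ q - 1 := le_trans hM (le_trans (min_le_left _ _) (min_le_right _ _))
    have hM2 : a₂ * (a + b) ≤ d - 1 := by
      have := le_trans hM (min_le_right _ _)
      exact (Int.le_ediv_iff_mul_le hab').mp this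
    by_cases hc : a₂ ≤ l
    · simp only [Lt, if_pos hc]; linarith
    · simp only [Lt, if_neg hc]
      push_neg at hc
      have hc' : l + 1 ≤ a₂ := hc
      have hk1 : a * ((d - 1 - b * a₂) / a) ≤ d - 1 - b * a₂ :=
        (ediv_bounds' (d - 1 - b * a₂) a ha').1
      have hk2 : d - 1 - b * a₂ < a * ((d - 1 - b * a₂) / a) + a :=
        (ediv_bounds' (d - 1 - b * a₂) a ha').2
      set k : ℤ := (d - 1 - b * a₂) / a with hk
      -- k ≤ q - 2
      have hba2 : b * (l + 1) ≤ b * a₂ := by nlinarith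
      have hkq : k ≤ q - 2 := by
        have h1 : a * k < a * (q - 1) := by nlinarith
        have := lt_of_mul_lt_mul_left h1 (le_of_lt ha')
        linarith
      -- a₂ - l ≤ q - 1 - k
      have hm : a₂ - l ≤ q - 1 - k := by
        have h1 : b * (a₂ - l - 1) < a * (q - 1 - k) := by nlinarith
        have h2 : b * (a₂ - l - 1) < b * (q - 1 - k) := by nlinarith
        have := lt_of_mul_lt_mul_left h2 (le_of_lt hb)
        linarith
      nlinarith [mul_nonneg (by linarith : (0:ℤ) ≤ q - k - 1)
        (by linarith : (0:ℤ) ≤ q - a₂ - 1)]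
end
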